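/- Let (β,δ) lie in the exponential regime ℰ and let β + δ < α < 1 − δ. Then, as N → ∞, the Green-function occupation sum Σ_{n=1}^{⌊N^α⌋} G_N(n,n) is logarithmically equivalent to exp(2 N^{α−β−δ}), i.e. log( Σ_{n=1}^{⌊N^α⌋} G_N(n,n) ) / ( 2 N^{α−β−δ} ) → 1. -/

import Mathlib

set_option maxHeartbeats 1000000


open Filter Finset

namespace MullerRatchet4

/-- Per-capita upward rate of the time-rescaled best-class process:
`p_n = (1/(2m) + 1/ρ)(1 − n/N)` with `m = N^{−β}`, `ρ = 1 − N^{−δ}`. -/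
noncomputable def pr (β δ : ℝ) (N n : ℕ) : ℝ :=
  (1 / (2 * (N:ℝ)^(-β)) + 1 / (1 - (N:ℝ)^(-δ))) * (1 - (n:ℝ)/(N:ℝ))

/-- Per-capita downward rate `q_n = (1/(2m))(1 − n/N) + 1` with `m = N^{−β}`. -/
noncomputable def qr (β : ℝ) (N n : ℕ) : ℝ :=
  (1 / (2 * (N:ℝ)^(-β))) * (1 - (n:ℝ)/(N:ℝ)) + 1

/-- Green function `G_N(n₀,n) = (1/(n q_n)) Σ_{l=0}^{min(n₀,n)−1} ∏_{k=l+1}^{n−1} p_k/q_k`. -/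
noncomputable def G (β δ : ℝ) (N n₀ n : ℕ) : ℝ :=
  (1 / ((n:ℝ) * qr β N n)) * ∑ l ∈ Finset.range (min n₀ n),
    ∏ k ∈ Finset.Icc (l+1) (n-1), pr β δ N k / qr β N k

noncomputable def Dd (β δ α : ℝ) (N : ℕ) : ℝ :=
  (1 - (N:ℝ)^(-δ)) * ((1 - ((⌊(N:ℝ)^α⌋₊:ℕ):ℝ)/(N:ℝ))/2 + (N:ℝ)^(-β))
noncomputable def Cb (β δ α : ℝ) (N : ℕ) : ℝ := (N:ℝ)^(-(β+δ)) / Dd β δ α N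
noncomputable def cb (β δ α : ℝ) (N : ℕ) : ℝ :=
  (N:ℝ)^(-(β+δ)) * (2*(1 - (((⌊(N:ℝ)^α⌋₊:ℕ):ℝ)/(N:ℝ))*(N:ℝ)^δ)/(1+2*(N:ℝ)^(-β)))

structure Facts (β δ α : ℝ) (N : ℕ) : Prop where
  hN : 2 ≤ N
  ha0 : (0:ℝ) < (N:ℝ)^(-β)
  ha1 : (N:ℝ)^(-β) < 1
  hd0 : (0:ℝ) < (N:ℝ)^(-δ)
  hd1 : (N:ℝ)^(-δ) < 1
  hM1 : 1 ≤ ⌊(N:ℝ)^α⌋₊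
  hMle : ((⌊(N:ℝ)^α⌋₊:ℕ):ℝ) ≤ (N:ℝ)^α
  hMN : ((⌊(N:ℝ)^α⌋₊:ℕ):ℝ) < (N:ℝ)
  hμd : ((⌊(N:ℝ)^α⌋₊:ℕ):ℝ)/(N:ℝ) ≤ (N:ℝ)^(-δ)

variable {β δ α : ℝ} {N : ℕ}

theorem facts (hβ0 : 0 < β) (hβ1 : β < 1) (hδ0 : 0 < δ)
    (hα0 : β + δ < α) (hα1 : α < 1 - δ) (hN : 2 ≤ N) : Facts β δ α N := by
  have hN1 : (1:ℝ) < (N:ℝ) := by exact_mod_cast Nat.lt_of_lt_of_le one_lt_two hN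
  have hN0 : (0:ℝ) < (N:ℝ) := by linarith
  have hα0' : 0 < α := by linarith
  have hα1' : α < 1 := by linarith
  have hMle : ((⌊(N:ℝ)^α⌋₊:ℕ):ℝ) ≤ (N:ℝ)^α :=
    Nat.floor_le (Real.rpow_nonneg hN0.le _)
  have h1le : (1:ℝ) ≤ (N:ℝ)^α := Real.one_le_rpow hN1.le hα0'.le
  refine ⟨hN, Real.rpow_pos_of_pos hN0 _, Real.rpow_lt_one_of_one_lt_of_neg hN1 (by linarith),
    Real.rpow_pos_of_pos hN0 _, Real.rpow_lt_one_of_one_lt_of_neg hN1 (by linarith),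
    ?_, hMle, ?_, ?_⟩
  · exact Nat.le_floor (by exact_mod_cast h1le)
  · calc ((⌊(N:ℝ)^α⌋₊:ℕ):ℝ) ≤ (N:ℝ)^α := hMle
      _ < (N:ℝ)^(1:ℝ) := Real.rpow_lt_rpow_of_exponent_lt hN1 hα1'
      _ = (N:ℝ) := Real.rpow_one _
  · rw [div_le_iff₀ hN0]
    calc ((⌊(N:ℝ)^α⌋₊:ℕ):ℝ) ≤ (N:ℝ)^α := hMle
      _ ≤ (N:ℝ)^(-δ+1) := Real.rpow_le_rpow_of_exponent_le hN1.le (by linarith)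
      _ = (N:ℝ)^(-δ) * (N:ℝ) := by
          rw [Real.rpow_add hN0, Real.rpow_one]

theorem ratio_bounds (F : Facts β δ α N) {k : ℕ} (hkM : k ≤ ⌊(N:ℝ)^α⌋₊) :
    (1 ≤ qr β N k) ∧ (1 + cb β δ α N ≤ pr β δ N k / qr β N k) ∧
      (pr β δ N k / qr β N k ≤ 1 + Cb β δ α N) := by
  obtain ⟨hN, ha0, ha1, hd0, hd1, hM1, hMle, hMN, hμd⟩ := F
  have hN0 : (0:ℝ) < N := by exact_mod_cast Nat.lt_of_lt_of_le Nat.zero_lt_two hN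
  set a := (N:ℝ)^(-β) with hadef
  set d := (N:ℝ)^(-δ) with hddef
  set μ := ((⌊(N:ℝ)^α⌋₊:ℕ):ℝ)/(N:ℝ) with hμdef
  have hkMr : (k:ℝ) ≤ ((⌊(N:ℝ)^α⌋₊:ℕ):ℝ) := by exact_mod_cast hkM
  set x := 1 - (k:ℝ)/(N:ℝ) with hxdef
  have hxμ : 1 - μ ≤ x := by
    have h : (k:ℝ)/(N:ℝ) ≤ μ := by rw [hμdef]; gcongr
    rw [hxdef]; linarith
  have hμ0 : 0 ≤ μ := by positivity
  have hx1 : x ≤ 1 := by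
    rw [hxdef]; have : (0:ℝ) ≤ (k:ℝ)/(N:ℝ) := by positivity
    linarith
  have hx0 : 0 < x := by
    have : 1 - d ≤ 1 - μ := by linarith
    linarith [hd1]
  have h1d : (0:ℝ) < 1 - d := by linarith
  have hP0 : (0:ℝ) < (1-μ)/2 + a := by
    have : μ ≤ d := hμd
    nlinarith
  have had : (N:ℝ)^(-(β+δ)) = a * d := by
    rw [hadef, hddef, ← Real.rpow_add hN0]; ring_nf
  have hdd : (N:ℝ)^δ = 1/d := by
    rw [hddef, Real.rpow_neg hN0.le, one_div, inv_inv]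
  have hq : qr β N k = (1/(2*a))*x + 1 := rfl
  have hp : pr β δ N k = (1/(2*a) + 1/(1-d))*x := rfl
  have hq0 : 0 < qr β N k := by rw [hq]; positivity
  have hq1 : 1 ≤ qr β N k := by
    rw [hq]; have : 0 ≤ (1/(2*a))*x := by positivity
    linarith
  refine ⟨hq1, ?_, ?_⟩
  · rw [le_div_iff₀ hq0]
    unfold cb
    rw [had, hdd, ← hadef, ← hμdef, hq]
    clear_value a d μ x
    have h2a : (0:ℝ) < 1 + 2*a := by linarith
    have hdμ : 0 ≤ d - μ := by linarith
    have key2 : (d-μ)*((1-d)*(x+2*a)) ≤ (x-1+d)*(1+2*a) := by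
      have e1 : (0:ℝ) ≤ (1+2*a)-(1-d)*(x+2*a) := by
        nlinarith [mul_nonneg hd0.le hx0.le, mul_nonneg ha0.le hd0.le]
      nlinarith [mul_nonneg hdμ e1, mul_nonneg (by linarith : (0:ℝ) ≤ x-(1-μ)) h2a.le]
    have hc : a*d*(2*(1-μ*(1/d))/(1+2*a)) = 2*a*(d-μ)/(1+2*a) := by
      field_simp
    rw [hc]
    have hpq : (1/(2*a) + 1/(1-d))*x - (1/(2*a)*x+1) = (x-(1-d))/(1-d) := by
      field_simp; ring
    have step : (2*a*(d-μ)/(1+2*a)) * (1/(2*a)*x+1) ≤ (x-(1-d))/(1-d) := by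
      rw [div_mul_eq_mul_div, div_le_div_iff₀ h2a h1d]
      have e2 : 2*a*(d-μ)*(1/(2*a)*x+1) = (d-μ)*(x+2*a) := by
        field_simp
      rw [e2]
      nlinarith [key2]
    have : pr β δ N k = (1/(2*a) + 1/(1-d))*x := hp
    rw [this]
    nlinarith [step, hpq]
  · rw [div_le_iff₀ hq0]
    unfold Cb Dd
    rw [had, ← hadef, ← hddef, ← hμdef, hq, hp]
    clear_value a d μ x
    have key : (x-(1-d))*((1-μ)/2+a) ≤ d*(x/2+a) := by
      nlinarith [mul_nonneg (by linarith : (0:ℝ) ≤ 1-x) hP0.le,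
        mul_nonneg hd0.le (by linarith : (0:ℝ) ≤ x-(1-μ))]
    have hZ0 : (0:ℝ) < (1-d)*((1-μ)/2+a) := mul_pos h1d hP0
    have hpq : (1/(2*a) + 1/(1-d))*x - (1/(2*a)*x+1) = (x-(1-d))/(1-d) := by
      field_simp; ring
    have step : (x-(1-d))/(1-d) ≤ (a*d/((1-d)*((1-μ)/2+a))) * (1/(2*a)*x+1) := by
      rw [div_mul_eq_mul_div, div_le_div_iff₀ h1d hZ0]
      have e2 : a*d*(1/(2*a)*x+1) = d*(x/2+a) := by
        field_simp
      rw [e2]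
      nlinarith [mul_le_mul_of_nonneg_right key h1d.le]
    nlinarith [step, hpq]


theorem cb_nonneg (F : Facts β δ α N) : 0 ≤ cb β δ α N := by
  obtain ⟨hN, ha0, ha1, hd0, hd1, hM1, hMle, hMN, hμd⟩ := F
  have hN0 : (0:ℝ) < N := by exact_mod_cast Nat.lt_of_lt_of_le Nat.zero_lt_two hN
  have hδ0 : (0:ℝ) < (N:ℝ)^δ := Real.rpow_pos_of_pos hN0 _
  have hprod : (N:ℝ)^(-δ) * (N:ℝ)^δ = 1 := by
    rw [← Real.rpow_add hN0]; simp
  have h1 : ((⌊(N:ℝ)^α⌋₊:ℕ):ℝ)/(N:ℝ) * (N:ℝ)^δ ≤ 1 := by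
    calc ((⌊(N:ℝ)^α⌋₊:ℕ):ℝ)/(N:ℝ) * (N:ℝ)^δ ≤ (N:ℝ)^(-δ) * (N:ℝ)^δ :=
          mul_le_mul_of_nonneg_right hμd hδ0.le
      _ = 1 := hprod
  unfold cb
  have h2 : (0:ℝ) < 1 + 2*(N:ℝ)^(-β) := by linarith
  have h3 : (0:ℝ) < (N:ℝ)^(-(β+δ)) := Real.rpow_pos_of_pos hN0 _
  apply mul_nonneg h3.le
  apply div_nonneg _ h2.le
  linarith

theorem Cb_pos (F : Facts β δ α N) : 0 < Cb β δ α N := by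
  obtain ⟨hN, ha0, ha1, hd0, hd1, hM1, hMle, hMN, hμd⟩ := F
  have hN0 : (0:ℝ) < N := by exact_mod_cast Nat.lt_of_lt_of_le Nat.zero_lt_two hN
  unfold Cb Dd
  apply div_pos (Real.rpow_pos_of_pos hN0 _)
  apply mul_pos (by linarith)
  have : ((⌊(N:ℝ)^α⌋₊:ℕ):ℝ)/(N:ℝ) ≤ (N:ℝ)^(-δ) := hμd
  nlinarith

theorem G_nonneg (F : Facts β δ α N) {n : ℕ} (hn1 : 1 ≤ n) (hnM : n ≤ ⌊(N:ℝ)^α⌋₊) :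
    0 ≤ G β δ N n n := by
  apply mul_nonneg
  · apply one_div_nonneg.2
    apply mul_nonneg (Nat.cast_nonneg n)
    have := (ratio_bounds F hnM).1
    linarith
  · apply Finset.sum_nonneg
    intro l _
    apply Finset.prod_nonneg
    intro k hk
    have hkM : k ≤ ⌊(N:ℝ)^α⌋₊ := by
      have := (Finset.mem_Icc.1 hk).2; omega
    have h := (ratio_bounds F hkM).2.1
    have := cb_nonneg F
    linarith

theorem G_le (F : Facts β δ α N) {n : ℕ} (hn1 : 1 ≤ n) (hnM : n ≤ ⌊(N:ℝ)^α⌋₊) :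
    G β δ N n n ≤ (1 + Cb β δ α N)^(⌊(N:ℝ)^α⌋₊) := by
  set M := ⌊(N:ℝ)^α⌋₊ with hM
  have hCb := Cb_pos F
  have hcb := cb_nonneg F
  have hq1 : 1 ≤ qr β N n := (ratio_bounds F hnM).1
  have hn0 : (0:ℝ) < n := by exact_mod_cast hn1
  have hB1 : (1:ℝ) ≤ 1 + Cb β δ α N := by linarith
  have hsum : ∑ l ∈ Finset.range (min n n),
      ∏ k ∈ Finset.Icc (l+1) (n-1), pr β δ N k / qr β N k
      ≤ (n:ℝ) * (1 + Cb β δ α N)^M := by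
    rw [min_self]
    calc ∑ l ∈ Finset.range n, ∏ k ∈ Finset.Icc (l+1) (n-1), pr β δ N k / qr β N k
        ≤ ∑ _l ∈ Finset.range n, (1 + Cb β δ α N)^M := by
          apply Finset.sum_le_sum
          intro l _
          calc ∏ k ∈ Finset.Icc (l+1) (n-1), pr β δ N k / qr β N k
              ≤ ∏ _k ∈ Finset.Icc (l+1) (n-1), (1 + Cb β δ α N) := by
                apply Finset.prod_le_prod
                · intro k hk
                  have hkM : k ≤ M := by have := (Finset.mem_Icc.1 hk).2; omega
                  have h := (ratio_bounds F hkM).2.1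
                  linarith
                · intro k hk
                  have hkM : k ≤ M := by have := (Finset.mem_Icc.1 hk).2; omega
                  exact (ratio_bounds F hkM).2.2
            _ = (1 + Cb β δ α N)^((Finset.Icc (l+1) (n-1)).card) := Finset.prod_const _
            _ ≤ (1 + Cb β δ α N)^M := by
                apply pow_le_pow_right₀ hB1
                rw [Nat.card_Icc]; omega
      _ = (n:ℝ) * (1 + Cb β δ α N)^M := by
          rw [Finset.sum_const, Finset.card_range, nsmul_eq_mul]
  unfold G
  calc (1 / ((n:ℝ) * qr β N n)) * ∑ l ∈ Finset.range (min n n),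
        ∏ k ∈ Finset.Icc (l+1) (n-1), pr β δ N k / qr β N k
      ≤ (1 / ((n:ℝ) * qr β N n)) * ((n:ℝ) * (1 + Cb β δ α N)^M) := by
        apply mul_le_mul_of_nonneg_left hsum
        positivity
    _ = (1 + Cb β δ α N)^M / qr β N n := by
        field_simp
    _ ≤ (1 + Cb β δ α N)^M := by
        apply div_le_self (by positivity) hq1

theorem G_ge (F : Facts β δ α N) :
    (1 + cb β δ α N)^(⌊(N:ℝ)^α⌋₊ - 1) / ((⌊(N:ℝ)^α⌋₊:ℝ) * (1/(2*(N:ℝ)^(-β)) + 1))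
      ≤ G β δ N ⌊(N:ℝ)^α⌋₊ ⌊(N:ℝ)^α⌋₊ := by
  set M := ⌊(N:ℝ)^α⌋₊ with hM
  have hM1 : 1 ≤ M := F.hM1
  have hcb := cb_nonneg F
  have hMpos : (0:ℝ) < M := by exact_mod_cast hM1
  have ha0 := F.ha0
  have hq1 : 1 ≤ qr β N M := (ratio_bounds F (le_refl M)).1
  have hqB : qr β N M ≤ 1/(2*(N:ℝ)^(-β)) + 1 := by
    unfold qr
    have h1 : (0:ℝ) ≤ (M:ℝ)/(N:ℝ) := by positivity
    have h2 : (0:ℝ) < 1/(2*(N:ℝ)^(-β)) := by positivity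
    nlinarith
  have hq0 : 0 < qr β N M := by linarith
  have hB0 : (0:ℝ) < 1/(2*(N:ℝ)^(-β)) + 1 := by positivity
  have hprod : (1 + cb β δ α N)^(M-1) ≤ ∑ l ∈ Finset.range (min M M),
      ∏ k ∈ Finset.Icc (l+1) (M-1), pr β δ N k / qr β N k := by
    rw [min_self]
    have h0M : 0 ∈ Finset.range M := Finset.mem_range.2 (by omega)
    calc (1 + cb β δ α N)^(M-1)
        = ∏ _k ∈ Finset.Icc (0+1) (M-1), (1 + cb β δ α N) := by
          rw [Finset.prod_const, Nat.card_Icc]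
          congr 1
      _ ≤ ∏ k ∈ Finset.Icc (0+1) (M-1), pr β δ N k / qr β N k := by
          apply Finset.prod_le_prod
          · intro k _; linarith
          · intro k hk
            have hkM : k ≤ M := by have := (Finset.mem_Icc.1 hk).2; omega
            exact (ratio_bounds F hkM).2.1
      _ ≤ ∑ l ∈ Finset.range M, ∏ k ∈ Finset.Icc (l+1) (M-1), pr β δ N k / qr β N k := by
          refine Finset.single_le_sum (f := fun l => ∏ k ∈ Finset.Icc (l+1) (M-1),
            pr β δ N k / qr β N k) ?_ h0M
          intro l _
          apply Finset.prod_nonneg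
          intro k hk
          have hkM : k ≤ M := by have := (Finset.mem_Icc.1 hk).2; omega
          have h := (ratio_bounds F hkM).2.1
          linarith
  unfold G
  calc (1 + cb β δ α N)^(M-1) / ((M:ℝ) * (1/(2*(N:ℝ)^(-β)) + 1))
      ≤ (1 + cb β δ α N)^(M-1) / ((M:ℝ) * qr β N M) := by
        apply div_le_div_of_nonneg_left (by positivity) (by positivity)
        apply mul_le_mul_of_nonneg_left hqB hMpos.le
    _ = (1 / ((M:ℝ) * qr β N M)) * (1 + cb β δ α N)^(M-1) := by ring
    _ ≤ (1 / ((M:ℝ) * qr β N M)) * ∑ l ∈ Finset.range (min M M),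
          ∏ k ∈ Finset.Icc (l+1) (M-1), pr β δ N k / qr β N k := by
        apply mul_le_mul_of_nonneg_left hprod
        positivity


section limits
variable {β δ α : ℝ}

theorem tendsto_rpow_neg_nat {b : ℝ} (hb : 0 < b) :
    Tendsto (fun N : ℕ => (N:ℝ)^(-b)) atTop (nhds 0) :=
  (tendsto_rpow_neg_atTop hb).comp tendsto_natCast_atTop_atTop

theorem tendsto_floor_div (hα : 0 < α) :
    Tendsto (fun N : ℕ => ((⌊(N:ℝ)^α⌋₊:ℕ):ℝ)/(N:ℝ)^α) atTop (nhds 1) :=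
  tendsto_nat_floor_div_atTop.comp ((tendsto_rpow_atTop hα).comp tendsto_natCast_atTop_atTop)

theorem tendsto_mu_rpow (hδ : 0 ≤ δ) (h1 : α + δ < 1) :
    Tendsto (fun N : ℕ => ((⌊(N:ℝ)^α⌋₊:ℕ):ℝ)/(N:ℝ) * (N:ℝ)^δ) atTop (nhds 0) := by
  have hup : Tendsto (fun N : ℕ => (N:ℝ)^(α+δ-1)) atTop (nhds 0) := by
    have := tendsto_rpow_neg_nat (b := 1-α-δ) (by linarith)
    convert this using 2 with N
    ring_nf
  apply tendsto_of_tendsto_of_tendsto_of_le_of_le' tendsto_const_nhds hup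
  · filter_upwards [eventually_ge_atTop 1] with N hN
    positivity
  · filter_upwards [eventually_ge_atTop 1] with N hN
    have hN0 : (0:ℝ) < N := by exact_mod_cast hN
    have hMle : ((⌊(N:ℝ)^α⌋₊:ℕ):ℝ) ≤ (N:ℝ)^α := Nat.floor_le (Real.rpow_nonneg hN0.le _)
    have hδ0 : (0:ℝ) < (N:ℝ)^δ := Real.rpow_pos_of_pos hN0 _
    rw [div_mul_eq_mul_div, div_le_iff₀ hN0]
    calc ((⌊(N:ℝ)^α⌋₊:ℕ):ℝ) * (N:ℝ)^δ ≤ (N:ℝ)^α * (N:ℝ)^δ :=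
          mul_le_mul_of_nonneg_right hMle hδ0.le
      _ = (N:ℝ)^(α+δ-1) * (N:ℝ) := by
          have h1 : (N:ℝ)^(α+δ-1) * (N:ℝ)^(1:ℝ) = (N:ℝ)^(α+δ) := by
            rw [← Real.rpow_add hN0]; ring_nf
          rw [← Real.rpow_add hN0, ← h1, Real.rpow_one]
  
theorem tendsto_mu (hα : 0 < α) (h1 : α < 1) :
    Tendsto (fun N : ℕ => ((⌊(N:ℝ)^α⌋₊:ℕ):ℝ)/(N:ℝ)) atTop (nhds 0) := by
  have := tendsto_mu_rpow (α := α) (δ := 0) le_rfl (by linarith)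
  simpa using this

theorem mul_log_two {f g : ℕ → ℝ} (hg0 : ∀ᶠ N in atTop, 0 ≤ g N)
    (hf0 : ∀ᶠ N in atTop, 0 ≤ f N) (hf : Tendsto f atTop (nhds 0))
    (h : Tendsto (fun N => g N * f N) atTop (nhds 2)) :
    Tendsto (fun N => g N * Real.log (1 + f N)) atTop (nhds 2) := by
  have hlow : Tendsto (fun N => g N * f N * (1 + f N)⁻¹) atTop (nhds 2) := by
    have h1 : Tendsto (fun N => (1 + f N)⁻¹) atTop (nhds 1) := by
      have : Tendsto (fun N => 1 + f N) atTop (nhds 1) := by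
        simpa using (tendsto_const_nhds (x := (1:ℝ))).add hf
      simpa using this.inv₀ one_ne_zero
    simpa using h.mul h1
  apply tendsto_of_tendsto_of_tendsto_of_le_of_le' hlow h
  · filter_upwards [hg0, hf0] with N hg hf
    have h1f : (0:ℝ) < 1 + f N := by linarith
    have hlog : f N / (1 + f N) ≤ Real.log (1 + f N) := by
      have := Real.log_le_sub_one_of_pos (x := (1 + f N)⁻¹) (by positivity)
      rw [Real.log_inv] at this
      have e : (1 + f N)⁻¹ - 1 = -(f N / (1+f N)) := by field_simp; ring
      rw [e] at this
      linarith
    calc g N * f N * (1 + f N)⁻¹ = g N * (f N / (1 + f N)) := by ring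
      _ ≤ g N * Real.log (1 + f N) := mul_le_mul_of_nonneg_left hlog hg
  · filter_upwards [hg0, hf0] with N hg hf
    have hlog : Real.log (1 + f N) ≤ f N := by
      have := Real.log_le_sub_one_of_pos (x := 1 + f N) (by linarith)
      linarith
    exact mul_le_mul_of_nonneg_left hlog hg

theorem tendsto_Cb_mul (hβ0 : 0 < β) (hβ1 : β < 1) (hδ0 : 0 < δ)
    (hα0 : β + δ < α) (hα1 : α < 1 - δ) :
    Tendsto (fun N : ℕ => (N:ℝ)^(β+δ) * Cb β δ α N) atTop (nhds 2) := by
  have hDd : Tendsto (fun N : ℕ => Dd β δ α N) atTop (nhds (1/2)) := by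
    have h1 : Tendsto (fun N : ℕ => 1 - (N:ℝ)^(-δ)) atTop (nhds 1) := by
      simpa using (tendsto_const_nhds (x := (1:ℝ))).sub (tendsto_rpow_neg_nat hδ0)
    have h2 : Tendsto (fun N : ℕ => (1 - ((⌊(N:ℝ)^α⌋₊:ℕ):ℝ)/(N:ℝ))/2 + (N:ℝ)^(-β))
        atTop (nhds (1/2)) := by
      have := ((tendsto_const_nhds (x := (1:ℝ))).sub (tendsto_mu (by linarith) (by linarith))).div_const 2
      simpa using this.add (tendsto_rpow_neg_nat hβ0)
    simpa [Dd] using h1.mul h2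
  have hinv : Tendsto (fun N : ℕ => 1 / Dd β δ α N) atTop (nhds 2) := by
    have := hDd.inv₀ (by norm_num)
    simpa [one_div] using this
  apply hinv.congr'
  filter_upwards [eventually_ge_atTop 1] with N hN
  have hN0 : (0:ℝ) < N := by exact_mod_cast hN
  unfold Cb
  have hone : (N:ℝ)^(β+δ) * (N:ℝ)^(-(β+δ)) = 1 := by
    rw [← Real.rpow_add hN0, add_neg_cancel, Real.rpow_zero]
  rw [← mul_div_assoc, hone]

theorem tendsto_cb_mul (hβ0 : 0 < β) (hδ0 : 0 < δ)
    (hα0 : β + δ < α) (hα1 : α < 1 - δ) :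
    Tendsto (fun N : ℕ => (N:ℝ)^(β+δ) * cb β δ α N) atTop (nhds 2) := by
  have hnum : Tendsto (fun N : ℕ => 2*(1 - ((⌊(N:ℝ)^α⌋₊:ℕ):ℝ)/(N:ℝ)*(N:ℝ)^δ))
      atTop (nhds 2) := by
    have h := tendsto_mu_rpow (α := α) hδ0.le (by linarith)
    have := ((tendsto_const_nhds (x := (1:ℝ))).sub h).const_mul 2
    simpa using this
  have hden : Tendsto (fun N : ℕ => 1 + 2*(N:ℝ)^(-β)) atTop (nhds 1) := by
    have := (tendsto_rpow_neg_nat hβ0).const_mul 2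
    simpa using (tendsto_const_nhds (x := (1:ℝ))).add this
  have hlim : Tendsto (fun N : ℕ =>
      2*(1 - ((⌊(N:ℝ)^α⌋₊:ℕ):ℝ)/(N:ℝ)*(N:ℝ)^δ)/(1 + 2*(N:ℝ)^(-β)))
      atTop (nhds 2) := by
    have := hnum.div hden one_ne_zero
    rw [div_one] at this
    exact this
  apply hlim.congr'
  filter_upwards [eventually_ge_atTop 1] with N hN
  have hN0 : (0:ℝ) < N := by exact_mod_cast hN
  have hone : (N:ℝ)^(β+δ) * (N:ℝ)^(-(β+δ)) = 1 := by
    rw [← Real.rpow_add hN0, add_neg_cancel, Real.rpow_zero]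
  unfold cb
  rw [← mul_assoc, hone, one_mul]

theorem tendsto_zero_of_mul {b : ℝ} (hb : 0 < b) {f : ℕ → ℝ}
    (h : Tendsto (fun N : ℕ => (N:ℝ)^b * f N) atTop (nhds 2)) :
    Tendsto f atTop (nhds 0) := by
  have h0 := (tendsto_rpow_neg_nat hb).mul h
  rw [zero_mul] at h0
  apply h0.congr'
  filter_upwards [eventually_ge_atTop 1] with N hN
  have hN0 : (0:ℝ) < N := by exact_mod_cast hN
  have hone : (N:ℝ)^(-b) * (N:ℝ)^b = 1 := by
    rw [← Real.rpow_add hN0, neg_add_cancel, Real.rpow_zero]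
  rw [← mul_assoc, hone, one_mul]

theorem log_div_lim (hε : 0 < α - β - δ) {h : ℕ → ℝ}
    (hbound : ∀ᶠ N in atTop, 1 ≤ h N ∧ h N ≤ ((N:ℝ))^(2:ℕ)) :
    Tendsto (fun N : ℕ => Real.log (h N) / (2*(N:ℝ)^(α-β-δ))) atTop (nhds 0) := by
  have hbase : Tendsto (fun N : ℕ => Real.log (N:ℝ) / (N:ℝ)^(α-β-δ)) atTop (nhds 0) :=
    ((isLittleO_log_rpow_atTop hε).tendsto_div_nhds_zero).comp tendsto_natCast_atTop_atTop
  apply tendsto_of_tendsto_of_tendsto_of_le_of_le' tendsto_const_nhds hbase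
  · filter_upwards [hbound, eventually_ge_atTop 1] with N hb hN
    have : (0:ℝ) ≤ Real.log (h N) := Real.log_nonneg hb.1
    positivity
  · filter_upwards [hbound, eventually_ge_atTop 1] with N hb hN
    have hN0 : (0:ℝ) < N := by exact_mod_cast hN
    have hT0 : (0:ℝ) < (N:ℝ)^(α-β-δ) := Real.rpow_pos_of_pos hN0 _
    have hlog : Real.log (h N) ≤ 2 * Real.log (N:ℝ) := by
      calc Real.log (h N) ≤ Real.log ((N:ℝ)^(2:ℕ)) :=
            Real.log_le_log (by linarith [hb.1]) hb.2
        _ = 2 * Real.log (N:ℝ) := by rw [Real.log_pow]; norm_num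
    calc Real.log (h N) / (2*(N:ℝ)^(α-β-δ)) ≤ (2*Real.log (N:ℝ)) / (2*(N:ℝ)^(α-β-δ)) := by
          apply div_le_div_of_nonneg_right hlog
          positivity
        _ = Real.log (N:ℝ) / (N:ℝ)^(α-β-δ) := by
          rw [mul_div_mul_left _ _ (two_ne_zero)]

end limits

/-- In the exponential regime `ℰ`, for `β + δ < α < 1 − δ`,
`Σ_{n=1}^{⌊N^α⌋} G_N(n,n)` is logarithmically equivalent to `exp(2 N^{α−β−δ})`. -/
theorem statement4 (β δ α : ℝ)
    (hβ0 : 0 < β) (hβ1 : β < 1)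
    (hδ0 : 0 < δ) (hδ1 : δ < (1 - β)/2)
    (hα0 : β + δ < α) (hα1 : α < 1 - δ) :
    Tendsto (fun N : ℕ =>
        Real.log (∑ n ∈ Finset.Icc 1 ⌊(N:ℝ)^α⌋₊, G β δ N n n) /
          (2 * (N:ℝ)^(α - β - δ)))
      atTop (nhds 1) := by
  have hα' : 0 < α := by linarith
  have hε : 0 < α - β - δ := by linarith
  have hFacts : ∀ᶠ N : ℕ in atTop, Facts β δ α N := by
    filter_upwards [eventually_ge_atTop 2] with N hN
    exact facts hβ0 hβ1 hδ0 hα0 hα1 hN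
  have hCbmul := tendsto_Cb_mul hβ0 hβ1 hδ0 hα0 hα1
  have hcbmul := tendsto_cb_mul hβ0 hδ0 hα0 hα1
  have hCb0 : Tendsto (fun N : ℕ => Cb β δ α N) atTop (nhds 0) :=
    tendsto_zero_of_mul (by linarith) hCbmul
  have hcb0 : Tendsto (fun N : ℕ => cb β δ α N) atTop (nhds 0) :=
    tendsto_zero_of_mul (by linarith) hcbmul
  have hCbge : ∀ᶠ N : ℕ in atTop, 0 ≤ Cb β δ α N := by
    filter_upwards [hFacts] with N F; exact (Cb_pos F).le
  have hcbge : ∀ᶠ N : ℕ in atTop, 0 ≤ cb β δ α N := by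
    filter_upwards [hFacts] with N F; exact cb_nonneg F
  have hgpos : ∀ᶠ N : ℕ in atTop, 0 ≤ (N:ℝ)^(β+δ) := by
    filter_upwards with N
    exact Real.rpow_nonneg (Nat.cast_nonneg N) _
  have hlogCb : Tendsto (fun N : ℕ => (N:ℝ)^(β+δ) * Real.log (1 + Cb β δ α N))
      atTop (nhds 2) := mul_log_two hgpos hCbge hCb0 hCbmul
  have hlogcb : Tendsto (fun N : ℕ => (N:ℝ)^(β+δ) * Real.log (1 + cb β δ α N))
      atTop (nhds 2) := mul_log_two hgpos hcbge hcb0 hcbmul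
  have hL1 := tendsto_floor_div (α := α) hα'
  have hinvα : Tendsto (fun N : ℕ => 1/(N:ℝ)^α) atTop (nhds 0) := by
    have h := (tendsto_rpow_atTop hα').comp (tendsto_natCast_atTop_atTop (R := ℝ))
    refine h.inv_tendsto_atTop.congr (fun N => ?_)
    simp [one_div]
  have hiden : ∀ᶠ N : ℕ in atTop, ∀ c L : ℝ,
      c * L / (2*(N:ℝ)^(α-β-δ)) = (c/(N:ℝ)^α) * ((N:ℝ)^(β+δ) * L / 2) := by
    filter_upwards [eventually_ge_atTop 1] with N hN c L
    have hN0 : (0:ℝ) < N := by exact_mod_cast hN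
    have h1 : (N:ℝ)^α = (N:ℝ)^(α-β-δ)*(N:ℝ)^(β+δ) := by
      rw [← Real.rpow_add hN0]; ring_nf
    have h2 : (0:ℝ) < (N:ℝ)^(α-β-δ) := Real.rpow_pos_of_pos hN0 _
    have h3 : (0:ℝ) < (N:ℝ)^(β+δ) := Real.rpow_pos_of_pos hN0 _
    rw [h1]
    field_simp
  -- upper limit pieces
  have hUp2 : Tendsto (fun N : ℕ =>
      ((⌊(N:ℝ)^α⌋₊:ℕ):ℝ) * Real.log (1 + Cb β δ α N) / (2*(N:ℝ)^(α-β-δ)))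
      atTop (nhds 1) := by
    have hprod : Tendsto (fun N : ℕ =>
        (((⌊(N:ℝ)^α⌋₊:ℕ):ℝ)/(N:ℝ)^α) * ((N:ℝ)^(β+δ) * Real.log (1 + Cb β δ α N) / 2))
        atTop (nhds 1) := by
      have h := hL1.mul (hlogCb.div_const 2)
      norm_num at h
      exact h
    apply hprod.congr'
    filter_upwards [hiden] with N hid
    exact (hid _ _).symm
  have hUpM : Tendsto (fun N : ℕ =>
      Real.log ((⌊(N:ℝ)^α⌋₊:ℕ):ℝ) / (2*(N:ℝ)^(α-β-δ))) atTop (nhds 0) := by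
    apply log_div_lim hε
    filter_upwards [hFacts] with N F
    have hN0 : (0:ℝ) < N := by
      exact_mod_cast Nat.lt_of_lt_of_le Nat.zero_lt_two F.hN
    have hN1 : (1:ℝ) ≤ N := by
      exact_mod_cast Nat.le_of_lt (Nat.lt_of_lt_of_le Nat.one_lt_two F.hN)
    constructor
    · exact_mod_cast F.hM1
    · have h1 : ((⌊(N:ℝ)^α⌋₊:ℕ):ℝ) ≤ N := F.hMN.le
      calc ((⌊(N:ℝ)^α⌋₊:ℕ):ℝ) ≤ (N:ℝ) := h1
        _ ≤ (N:ℝ)^(2:ℕ) := by nlinarith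
  have hUp : Tendsto (fun N : ℕ =>
      (Real.log ((⌊(N:ℝ)^α⌋₊:ℕ):ℝ)
        + ((⌊(N:ℝ)^α⌋₊:ℕ):ℝ) * Real.log (1 + Cb β δ α N)) / (2*(N:ℝ)^(α-β-δ)))
      atTop (nhds 1) := by
    have h := hUpM.add hUp2
    rw [zero_add] at h
    apply h.congr
    intro N
    rw [add_div]
  -- lower limit pieces
  have hM1' : Tendsto (fun N : ℕ => (((⌊(N:ℝ)^α⌋₊:ℕ):ℝ)-1)/(N:ℝ)^α) atTop (nhds 1) := by
    have h := hL1.sub hinvα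
    rw [sub_zero] at h
    apply h.congr
    intro N
    rw [sub_div]
  have hLo2 : Tendsto (fun N : ℕ =>
      (((⌊(N:ℝ)^α⌋₊:ℕ):ℝ)-1) * Real.log (1 + cb β δ α N) / (2*(N:ℝ)^(α-β-δ)))
      atTop (nhds 1) := by
    have hprod : Tendsto (fun N : ℕ =>
        ((((⌊(N:ℝ)^α⌋₊:ℕ):ℝ)-1)/(N:ℝ)^α) * ((N:ℝ)^(β+δ) * Real.log (1 + cb β δ α N) / 2))
        atTop (nhds 1) := by
      have h := hM1'.mul (hlogcb.div_const 2)
      norm_num at h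
      exact h
    apply hprod.congr'
    filter_upwards [hiden] with N hid
    exact (hid _ _).symm
  have hLoB : Tendsto (fun N : ℕ =>
      Real.log (((⌊(N:ℝ)^α⌋₊:ℕ):ℝ) * (1/(2*(N:ℝ)^(-β))+1)) / (2*(N:ℝ)^(α-β-δ)))
      atTop (nhds 0) := by
    apply log_div_lim hε
    filter_upwards [hFacts] with N F
    have hN0 : (0:ℝ) < N := by
      exact_mod_cast Nat.lt_of_lt_of_le Nat.zero_lt_two F.hN
    have hN2 : (2:ℝ) ≤ N := by exact_mod_cast F.hN
    have hM1r : (1:ℝ) ≤ ((⌊(N:ℝ)^α⌋₊:ℕ):ℝ) := by exact_mod_cast F.hM1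
    have hinva : 1/(2*(N:ℝ)^(-β)) = (N:ℝ)^β/2 := by
      rw [Real.rpow_neg hN0.le]
      have : (N:ℝ)^β ≠ 0 := ne_of_gt (Real.rpow_pos_of_pos hN0 _)
      field_simp
    have hβN : (N:ℝ)^β ≤ N := by
      calc (N:ℝ)^β ≤ (N:ℝ)^(1:ℝ) :=
            Real.rpow_le_rpow_of_exponent_le (by linarith) hβ1.le
        _ = N := Real.rpow_one _
    have hB1 : (1:ℝ) ≤ 1/(2*(N:ℝ)^(-β))+1 := by
      have := F.ha0
      have h2 : (0:ℝ) < 1/(2*(N:ℝ)^(-β)) := by positivity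
      linarith
    have hBN : 1/(2*(N:ℝ)^(-β))+1 ≤ N := by
      rw [hinva]
      linarith
    constructor
    · nlinarith
    · have h1 : ((⌊(N:ℝ)^α⌋₊:ℕ):ℝ) ≤ N := F.hMN.le
      calc ((⌊(N:ℝ)^α⌋₊:ℕ):ℝ) * (1/(2*(N:ℝ)^(-β))+1) ≤ (N:ℝ) * (N:ℝ) := by
            apply mul_le_mul h1 hBN (by linarith) hN0.le
        _ = (N:ℝ)^(2:ℕ) := by ring
  have hLo : Tendsto (fun N : ℕ =>
      ((((⌊(N:ℝ)^α⌋₊:ℕ):ℝ)-1) * Real.log (1 + cb β δ α N)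
        - Real.log (((⌊(N:ℝ)^α⌋₊:ℕ):ℝ) * (1/(2*(N:ℝ)^(-β))+1))) / (2*(N:ℝ)^(α-β-δ)))
      atTop (nhds 1) := by
    have h := hLo2.sub hLoB
    rw [sub_zero] at h
    apply h.congr
    intro N
    rw [sub_div]
  -- the sandwich
  have hkey : ∀ᶠ N : ℕ in atTop,
      ((((⌊(N:ℝ)^α⌋₊:ℕ):ℝ)-1) * Real.log (1 + cb β δ α N)
        - Real.log (((⌊(N:ℝ)^α⌋₊:ℕ):ℝ) * (1/(2*(N:ℝ)^(-β))+1))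
        ≤ Real.log (∑ n ∈ Finset.Icc 1 ⌊(N:ℝ)^α⌋₊, G β δ N n n))
      ∧ (Real.log (∑ n ∈ Finset.Icc 1 ⌊(N:ℝ)^α⌋₊, G β δ N n n)
        ≤ Real.log ((⌊(N:ℝ)^α⌋₊:ℕ):ℝ)
          + ((⌊(N:ℝ)^α⌋₊:ℕ):ℝ) * Real.log (1 + Cb β δ α N)) := by
    filter_upwards [hFacts] with N F
    set M := ⌊(N:ℝ)^α⌋₊ with hMdef
    set S := ∑ n ∈ Finset.Icc 1 M, G β δ N n n with hSdef
    have hM1 : 1 ≤ M := F.hM1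
    have hM0 : (0:ℝ) < (M:ℝ) := by exact_mod_cast hM1
    have ha0 := F.ha0
    have hB0 : (0:ℝ) < 1/(2*(N:ℝ)^(-β))+1 := by positivity
    have hcbN : 0 ≤ cb β δ α N := cb_nonneg F
    have hCbN : 0 ≤ Cb β δ α N := (Cb_pos F).le
    have hmem : M ∈ Finset.Icc 1 M := Finset.mem_Icc.2 ⟨hM1, le_refl M⟩
    have hGS : G β δ N M M ≤ S := by
      apply Finset.single_le_sum (f := fun n => G β δ N n n) _ hmem
      intro n hn
      exact G_nonneg F (Finset.mem_Icc.1 hn).1 (Finset.mem_Icc.1 hn).2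
    have hlow : (1 + cb β δ α N)^(M-1) / ((M:ℝ) * (1/(2*(N:ℝ)^(-β)) + 1)) ≤ S :=
      le_trans (G_ge F) hGS
    have hlbpos : (0:ℝ) < (1 + cb β δ α N)^(M-1) / ((M:ℝ) * (1/(2*(N:ℝ)^(-β)) + 1)) := by
      positivity
    have hSpos : 0 < S := lt_of_lt_of_le hlbpos hlow
    constructor
    · have h1 : Real.log ((1 + cb β δ α N)^(M-1) / ((M:ℝ) * (1/(2*(N:ℝ)^(-β)) + 1)))
          ≤ Real.log S := Real.log_le_log hlbpos hlow
      rw [Real.log_div (by positivity) (by positivity), Real.log_pow] at h1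
      have hc : ((M-1:ℕ):ℝ) = (M:ℝ)-1 := by
        push_cast [Nat.cast_sub hM1]
        ring
      rw [hc] at h1
      exact h1
    · have hle : S ≤ (M:ℝ)*(1 + Cb β δ α N)^M := by
        calc S ≤ ∑ _n ∈ Finset.Icc 1 M, (1 + Cb β δ α N)^M := by
              apply Finset.sum_le_sum
              intro n hn
              exact G_le F (Finset.mem_Icc.1 hn).1 (Finset.mem_Icc.1 hn).2
          _ = (M:ℝ)*(1 + Cb β δ α N)^M := by
              rw [Finset.sum_const, Nat.card_Icc, nsmul_eq_mul]
              congr 1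
      have h2 := Real.log_le_log hSpos hle
      rw [Real.log_mul (ne_of_gt hM0) (by positivity), Real.log_pow] at h2
      exact h2
  apply tendsto_of_tendsto_of_tendsto_of_le_of_le' hLo hUp
  · filter_upwards [hkey] with N h
    apply div_le_div_of_nonneg_right h.1
    positivity
  · filter_upwards [hkey] with N h
    apply div_le_div_of_nonneg_right h.2
    positivity

end MullerRatchet4
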